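/- Consider the Weibull scale family F_θ(x) := 1 − exp(−(x/θ)^ρ) for x > 0, with shape ρ > 0 and scale parameter θ ∈ (0,∞). Fix λ ∈ (0,1) and θ_0 > 0, and let h_{λ,θ_0}(θ) := F_{θ_0}(F_θ^{−1}(λ)). Then h_{λ,θ_0}(θ) = 1 − (1−λ)^{(θ/θ_0)^ρ}, and the second derivative at θ = θ_0 of the rate function I_{λ,θ_0}(θ) := H(λ|h_{λ,θ_0}(θ)) equals I_{λ,θ_0}″(θ_0) = ρ²·(1−λ)·(log(1−λ))²/(λ·θ_0²). Moreover, as a function of λ ∈ (0,1), I_{λ,θ_0}″(θ_0) is uniquely maximized at λ = λ̃_1, where λ̃_1 ∈ (1/2,1) is the unique root of −2λ − log(1−λ) = 0 (independently of ρ and θ_0). -/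

import Mathlib

open Set

/-- Relative entropy `H(p|q)` of the Bernoulli(`p`) law w.r.t. the Bernoulli(`q`) law. -/
noncomputable def relEntBer (p q : ℝ) : ℝ :=
  p * Real.log (p / q) + (1 - p) * Real.log ((1 - p) / (1 - q))


noncomputable def phiW (l : ℝ) : ℝ := -2 * l - Real.log (1 - l)

lemma phiW_hasDeriv {l : ℝ} (h : l < 1) :
    HasDerivAt phiW (-2 + (1 - l)⁻¹) l := by
  have h1 : HasDerivAt (fun x : ℝ => 1 - x) (-1) l := by
    simpa using (hasDerivAt_id l).const_sub 1
  have h2 : HasDerivAt (fun x : ℝ => Real.log (1 - x)) (-1 / (1 - l)) l :=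
    h1.log (by linarith)
  have h3 : HasDerivAt (fun x : ℝ => -2 * x) (-2) l := by
    simpa using (hasDerivAt_id l).const_mul (-2)
  have := h3.sub h2
  exact this.congr_deriv (by rw [inv_eq_one_div]; ring)

lemma phiW_contAt {l : ℝ} (h : l < 1) : ContinuousAt phiW l :=
  (phiW_hasDeriv h).continuousAt

lemma phiW_strictMono : StrictMonoOn phiW (Ico (1/2 : ℝ) 1) := by
  apply strictMonoOn_of_deriv_pos (convex_Ico _ _)
  · exact fun x hx => (phiW_contAt hx.2).continuousWithinAt
  · intro x hx
    rw [interior_Ico] at hx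
    rw [(phiW_hasDeriv hx.2).deriv]
    have h1 : (0:ℝ) < 1 - x := by linarith [hx.2]
    have h2 : 1 - x < 1/2 := by linarith [hx.1]
    have : (2:ℝ) < (1-x)⁻¹ := by
      rw [lt_inv_comm₀ (by norm_num) h1]; linarith
    linarith

lemma phiW_strictAnti : StrictAntiOn phiW (Icc (0:ℝ) (1/2)) := by
  apply strictAntiOn_of_deriv_neg (convex_Icc _ _)
  · exact fun x hx => (phiW_contAt (by linarith [hx.2] : x < 1)).continuousWithinAt
  · intro x hx
    rw [interior_Icc] at hx
    rw [(phiW_hasDeriv (by linarith [hx.2])).deriv]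
    have h1 : (0:ℝ) < 1 - x := by linarith [hx.2]
    have h2 : (1/2:ℝ) < 1 - x := by linarith [hx.2]
    have : (1-x)⁻¹ < 2 := by
      rw [inv_lt_comm₀ h1 (by norm_num)]; linarith
    linarith

lemma expm2_lt_half : Real.exp (-2 : ℝ) < 1/2 := by
  have h3 : (3:ℝ) ≤ Real.exp 2 := by
    have := Real.add_one_le_exp (2:ℝ); linarith
  have : Real.exp (-2:ℝ) = (Real.exp 2)⁻¹ := by rw [Real.exp_neg]
  rw [this]
  rw [inv_lt_comm₀ (Real.exp_pos 2) (by norm_num)]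
  linarith

lemma phiW_exists_root : ∃ l₁ ∈ Ioo (1/2 : ℝ) (1 - Real.exp (-2)), phiW l₁ = 0 := by
  have he := expm2_lt_half
  have hep := Real.exp_pos (-2:ℝ)
  have hab : (1/2:ℝ) ≤ 1 - Real.exp (-2) := by linarith
  have hc : ContinuousOn phiW (Icc (1/2:ℝ) (1 - Real.exp (-2))) :=
    fun x hx => (phiW_contAt (by linarith [hx.2] : x < 1)).continuousWithinAt
  have hmem : (0:ℝ) ∈ Ioo (phiW (1/2)) (phiW (1 - Real.exp (-2))) := by
    constructor
    · show phiW (1/2) < 0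
      unfold phiW
      have : Real.log (1 - 1/2) = - Real.log 2 := by
        rw [show (1:ℝ) - 1/2 = 2⁻¹ by norm_num, Real.log_inv]
      rw [this]
      have := Real.log_two_lt_d9
      linarith
    · show (0:ℝ) < phiW (1 - Real.exp (-2))
      unfold phiW
      have : (1 : ℝ) - (1 - Real.exp (-2)) = Real.exp (-2) := by ring
      rw [this, Real.log_exp]
      linarith
  obtain ⟨l₁, hl₁, hroot⟩ := intermediate_value_Ioo hab hc hmem
  exact ⟨l₁, hl₁, hroot⟩

noncomputable def fcnW (l : ℝ) : ℝ := (1 - l) * (Real.log (1 - l))^2 / l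

lemma fcnW_hasDeriv {l : ℝ} (h0 : 0 < l) (h1 : l < 1) :
    HasDerivAt fcnW (Real.log (1 - l) * phiW l / l^2) l := by
  have h1l : (0:ℝ) < 1 - l := by linarith
  have hs : HasDerivAt (fun x : ℝ => 1 - x) (-1) l := by
    simpa using (hasDerivAt_id l).const_sub 1
  have hlog : HasDerivAt (fun x : ℝ => Real.log (1 - x)) (-1 / (1 - l)) l :=
    hs.log h1l.ne'
  have hsq := hlog.pow 2
  have hnum := hs.mul hsq
  have hdiv := hnum.div (hasDerivAt_id l) h0.ne'
  exact hdiv.congr_deriv (by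
    unfold phiW
    simp only [Pi.mul_apply, Pi.pow_apply, id]
    field_simp
    ring)

lemma fcnW_max {l₁ : ℝ} (hl₁ : l₁ ∈ Ioo (1/2:ℝ) 1) (hroot : phiW l₁ = 0) :
    ∀ l ∈ Ioo (0:ℝ) 1, l ≠ l₁ → fcnW l < fcnW l₁ := by
  have phiW0 : phiW 0 = 0 := by simp [phiW]
  have hneg : ∀ l ∈ Ioo (0:ℝ) l₁, phiW l < 0 := by
    intro l hl
    rcases le_or_gt l (1/2) with hc | hc
    · have := phiW_strictAnti (left_mem_Icc.2 (by norm_num)) ⟨hl.1.le, hc⟩ hl.1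
      linarith [this]
    · have := phiW_strictMono ⟨hc.le, by linarith [hl.2, hl₁.2]⟩ ⟨hl₁.1.le, hl₁.2⟩ hl.2
      linarith
  have hpos : ∀ l ∈ Ioo l₁ (1:ℝ), 0 < phiW l := by
    intro l hl
    have := phiW_strictMono ⟨hl₁.1.le, hl₁.2⟩ ⟨by linarith [hl₁.1, hl.1], hl.2⟩ hl.1
    linarith
  have hlog : ∀ l : ℝ, 0 < l → l < 1 → Real.log (1 - l) < 0 := fun l h0 h1 =>
    Real.log_neg (by linarith) (by linarith)
  have hmono : StrictMonoOn fcnW (Ioc 0 l₁) := by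
    apply strictMonoOn_of_deriv_pos (convex_Ioc _ _)
    · intro x hx
      exact (fcnW_hasDeriv hx.1 (lt_of_le_of_lt hx.2 hl₁.2)).continuousAt.continuousWithinAt
    · intro x hx
      rw [interior_Ioc] at hx
      have hx1 : x < 1 := lt_trans hx.2 hl₁.2
      rw [(fcnW_hasDeriv hx.1 hx1).deriv]
      exact div_pos (mul_pos_of_neg_of_neg (hlog x hx.1 hx1) (hneg x hx)) (pow_pos hx.1 2)
  have hanti : StrictAntiOn fcnW (Ico l₁ 1) := by
    apply strictAntiOn_of_deriv_neg (convex_Ico _ _)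
    · intro x hx
      exact (fcnW_hasDeriv (by linarith [hl₁.1, hx.1]) hx.2).continuousAt.continuousWithinAt
    · intro x hx
      rw [interior_Ico] at hx
      have hx0 : (0:ℝ) < x := by linarith [hl₁.1, hx.1]
      rw [(fcnW_hasDeriv hx0 hx.2).deriv]
      exact div_neg_of_neg_of_pos (mul_neg_of_neg_of_pos (hlog x hx0 hx.2) (hpos x hx)) (pow_pos hx0 2)
  intro l hl hne
  rcases lt_or_gt_of_ne hne with hc | hc
  · exact hmono ⟨hl.1, hc.le⟩ ⟨by linarith [hl₁.1], le_refl _⟩ hc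
  · exact hanti ⟨le_refl _, hl₁.2⟩ ⟨hc.le, hl.2⟩ hc

noncomputable def wW (L ρ θ₀ θ : ℝ) : ℝ := Real.exp (L * (θ/θ₀)^ρ)

noncomputable def wW' (L ρ θ₀ θ : ℝ) : ℝ :=
  Real.exp (L * (θ/θ₀)^ρ) * (L * (1/θ₀ * ρ * (θ/θ₀)^(ρ-1)))

noncomputable def GW (l L ρ θ₀ θ : ℝ) : ℝ :=
  l * (Real.log l - Real.log (1 - wW L ρ θ₀ θ)) +
    (1-l) * (Real.log (1-l) - Real.log (wW L ρ θ₀ θ))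

noncomputable def DW (l L ρ θ₀ θ : ℝ) : ℝ :=
  l * (wW' L ρ θ₀ θ / (1 - wW L ρ θ₀ θ)) - (1-l) * (wW' L ρ θ₀ θ / wW L ρ θ₀ θ)

lemma wW_hasDeriv {L ρ θ₀ θ : ℝ} (hθ₀ : 0 < θ₀) (hθ : 0 < θ) :
    HasDerivAt (wW L ρ θ₀) (wW' L ρ θ₀ θ) θ := by
  have hdiv : HasDerivAt (fun θ : ℝ => θ/θ₀) (1/θ₀) θ := (hasDerivAt_id θ).div_const θ₀
  have hr := hdiv.rpow_const (p := ρ) (Or.inl (div_pos hθ hθ₀).ne')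
  have := (hr.const_mul L).exp
  exact this

lemma wW_pos (L ρ θ₀ θ : ℝ) : 0 < wW L ρ θ₀ θ := Real.exp_pos _

lemma wW_lt_one {L ρ θ₀ θ : ℝ} (hL : L < 0) (hθ₀ : 0 < θ₀) (hθ : 0 < θ) :
    wW L ρ θ₀ θ < 1 := by
  unfold wW
  rw [Real.exp_lt_one_iff]
  exact mul_neg_of_neg_of_pos hL (Real.rpow_pos_of_pos (div_pos hθ hθ₀) ρ)

lemma GW_hasDeriv {l L ρ θ₀ θ : ℝ} (hL : L < 0) (hθ₀ : 0 < θ₀) (hθ : 0 < θ) :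
    HasDerivAt (GW l L ρ θ₀) (DW l L ρ θ₀ θ) θ := by
  have hw := wW_hasDeriv (L := L) (ρ := ρ) hθ₀ hθ
  have hw1 : 1 - wW L ρ θ₀ θ ≠ 0 := by
    have := wW_lt_one (L := L) (ρ := ρ) hL hθ₀ hθ; linarith
  have hlog1 : HasDerivAt (fun θ => Real.log (1 - wW L ρ θ₀ θ))
      (-(wW' L ρ θ₀ θ) / (1 - wW L ρ θ₀ θ)) θ := (hw.const_sub 1).log hw1
  have hlog2 : HasDerivAt (fun θ => Real.log (wW L ρ θ₀ θ))
      (wW' L ρ θ₀ θ / wW L ρ θ₀ θ) θ := hw.log (wW_pos L ρ θ₀ θ).ne'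
  have h1 := ((hasDerivAt_const θ (Real.log l)).sub hlog1).const_mul l
  have h2 := ((hasDerivAt_const θ (Real.log (1-l))).sub hlog2).const_mul (1-l)
  have := h1.add h2
  unfold GW DW
  exact this.congr_deriv (by
    field_simp
    ring)

lemma DW_deriv {l L ρ θ₀ : ℝ} (hθ₀ : 0 < θ₀) (hl0 : 0 < l) (hl1 : l < 1)
    (heL : Real.exp L = 1 - l) :
    deriv (DW l L ρ θ₀) θ₀ = ρ^2 * (1-l) * L^2 / (l * θ₀^2) := by
  have hθne : θ₀ ≠ 0 := hθ₀.ne'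
  have hw := wW_hasDeriv (L := L) (ρ := ρ) hθ₀ hθ₀
  have hdiv : HasDerivAt (fun θ : ℝ => θ/θ₀) (1/θ₀) θ₀ := (hasDerivAt_id θ₀).div_const θ₀
  have hone : θ₀ / θ₀ ≠ 0 := by rw [div_self hθne]; norm_num
  have hv := (hdiv.rpow_const (p := ρ - 1) (Or.inl hone)).const_mul (1/θ₀ * ρ)
  have hv2 := hv.const_mul L
  have hprod : HasDerivAt (wW' L ρ θ₀)
      (wW' L ρ θ₀ θ₀ * (L * (1/θ₀ * ρ * (θ₀/θ₀)^(ρ-1))) +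
        wW L ρ θ₀ θ₀ * (L * (1/θ₀ * ρ * (1/θ₀ * (ρ-1) * (θ₀/θ₀)^(ρ-1-1))))) θ₀ := by
    exact hw.mul hv2
  have hwθ₀ : wW L ρ θ₀ θ₀ = 1 - l := by
    unfold wW; rw [div_self hθne, Real.one_rpow, mul_one, heL]
  have hne1 : 1 - wW L ρ θ₀ θ₀ ≠ 0 := by rw [hwθ₀]; intro hc; linarith [hl0]
  have hne2 : wW L ρ θ₀ θ₀ ≠ 0 := by rw [hwθ₀]; intro hc; linarith [hl1]
  have h1 := (hprod.div (hw.const_sub 1) hne1).const_mul l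
  have h2 := (hprod.div hw hne2).const_mul (1-l)
  have hD : HasDerivAt (DW l L ρ θ₀) _ θ₀ := h1.sub h2
  rw [hD.deriv]
  have hw'θ₀ : wW' L ρ θ₀ θ₀ = (1-l) * (L * (1/θ₀ * ρ)) := by
    unfold wW'
    rw [div_self hθne, Real.one_rpow, Real.one_rpow, mul_one, heL]
    ring
  rw [hwθ₀, hw'θ₀, div_self hθne, Real.one_rpow]
  have h1l : (1:ℝ) - l ≠ 0 := by intro hc; linarith
  have hl0' : l ≠ 0 := hl0.ne'
  simp only [Real.one_rpow]
  field_simp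
  have hinv : l * l⁻¹ = 1 := mul_inv_cancel₀ hl0'
  linear_combination (l * l⁻¹ + 1) * (L^2*ρ^2 - l*L*ρ + l*L*ρ^2) * hinv

lemma curvW {ρ θ₀ l : ℝ} (hθ₀ : 0 < θ₀) (hl0 : 0 < l) (hl1 : l < 1)
    (g : ℝ → ℝ)
    (hg : ∀ θ ∈ Ioi (0:ℝ), g θ = relEntBer l (1 - wW (Real.log (1-l)) ρ θ₀ θ)) :
    deriv (deriv g) θ₀ = ρ^2 * (1-l) * (Real.log (1-l))^2 / (l * θ₀^2) := by
  set L := Real.log (1-l) with hLdef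
  have hL : L < 0 := Real.log_neg (by linarith) (by linarith)
  have heL : Real.exp L = 1 - l := Real.exp_log (by linarith)
  have hEq : EqOn g (GW l L ρ θ₀) (Ioi 0) := by
    intro θ hθ
    rw [hg θ hθ]
    have hw0 := wW_pos L ρ θ₀ θ
    have hw1 := wW_lt_one (ρ := ρ) hL hθ₀ hθ
    unfold relEntBer GW
    rw [show (1:ℝ) - (1 - wW L ρ θ₀ θ) = wW L ρ θ₀ θ by ring,
      Real.log_div hl0.ne' (by linarith : (1:ℝ) - wW L ρ θ₀ θ ≠ 0),
      Real.log_div (by linarith : (1:ℝ) - l ≠ 0) hw0.ne']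
  have dg : EqOn (deriv g) (DW l L ρ θ₀) (Ioi 0) := by
    intro θ hθ
    have hev : g =ᶠ[nhds θ] GW l L ρ θ₀ :=
      Filter.eventuallyEq_of_mem (Ioi_mem_nhds hθ) hEq
    rw [hev.deriv_eq, (GW_hasDeriv hL hθ₀ hθ).deriv]
  have hev2 : deriv g =ᶠ[nhds θ₀] DW l L ρ θ₀ :=
    Filter.eventuallyEq_of_mem (Ioi_mem_nhds hθ₀) dg
  rw [hev2.deriv_eq, DW_deriv hθ₀ hl0 hl1 heL]

lemma hW_eq {ρ θ₀ l θ : ℝ} (hρ : 0 < ρ) (hθ₀ : 0 < θ₀) (hl0 : 0 < l) (hl1 : l < 1)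
    (hθ : 0 < θ) :
    1 - Real.exp (-(θ * (-Real.log (1-l)) ^ (1/ρ) / θ₀) ^ ρ) = 1 - wW (Real.log (1-l)) ρ θ₀ θ := by
  have hL : Real.log (1-l) < 0 := Real.log_neg (by linarith) (by linarith)
  have hnL : (0:ℝ) ≤ -Real.log (1-l) := by linarith
  have h1 : θ * (-Real.log (1-l)) ^ (1/ρ) / θ₀ = (θ/θ₀) * (-Real.log (1-l)) ^ (1/ρ) := by
    ring
  rw [h1, Real.mul_rpow (div_pos hθ hθ₀).le (Real.rpow_nonneg hnL _),
    ← Real.rpow_mul hnL, one_div, inv_mul_cancel₀ hρ.ne', Real.rpow_one]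
  unfold wW
  ring_nf

lemma wW_rpow {ρ θ₀ l θ : ℝ} (hl1 : l < 1) :
    wW (Real.log (1-l)) ρ θ₀ θ = (1-l) ^ ((θ/θ₀)^ρ) := by
  rw [Real.rpow_def_of_pos (by linarith : (0:ℝ) < 1 - l)]
  rfl
/-- Weibull scale family `F_θ(x) = 1 − exp(−(x/θ)^ρ)`: the function
`h_{λ,θ₀}(θ) = F_{θ₀}(F_θ^{-1}(λ))`, the curvature `I_{λ,θ₀}''(θ₀)` of the
method-of-quantiles rate function, and its unique maximizer `λ̃₁` in `λ`. -/
theorem stmt_9 (ρ θ₀ : ℝ) (hρ : 0 < ρ) (hθ₀ : 0 < θ₀)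
    (lam : ℝ) (hlam : lam ∈ Set.Ioo (0 : ℝ) 1)
    (F : ℝ → ℝ → ℝ) (hF : ∀ θ x, F θ x = 1 - Real.exp (-(x / θ) ^ ρ))
    -- `Q l θ = F_θ^{-1}(l) = θ·(−log(1−l))^{1/ρ}`
    (Q : ℝ → ℝ → ℝ) (hQ : ∀ l θ, Q l θ = θ * (-Real.log (1 - l)) ^ (1 / ρ))
    (h : ℝ → ℝ → ℝ) (hh : ∀ l θ, h l θ = F θ₀ (Q l θ))
    -- `curv l = I_{l,θ₀}''(θ₀)` where `I_{l,θ₀}(θ) = H(l | h_{l,θ₀}(θ))`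
    (curv : ℝ → ℝ)
    (hcurv : ∀ l, curv l = deriv (deriv fun θ => relEntBer l (h l θ)) θ₀) :
    (∀ θ : ℝ, 0 < θ → h lam θ = 1 - (1 - lam) ^ ((θ / θ₀) ^ ρ)) ∧
    curv lam = ρ ^ 2 * (1 - lam) * (Real.log (1 - lam)) ^ 2 / (lam * θ₀ ^ 2) ∧
    ∃ l₁ : ℝ, l₁ ∈ Set.Ioo (1 / 2 : ℝ) 1 ∧ -2 * l₁ - Real.log (1 - l₁) = 0 ∧
      (∀ l ∈ Set.Ioo (1 / 2 : ℝ) 1, -2 * l - Real.log (1 - l) = 0 → l = l₁) ∧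
      (∀ l ∈ Set.Ioo (0 : ℝ) 1, l ≠ l₁ → curv l < curv l₁) := by
  obtain ⟨hlam0, hlam1⟩ := hlam
  have hform : ∀ l ∈ Set.Ioo (0:ℝ) 1, ∀ θ : ℝ, 0 < θ →
      h l θ = 1 - wW (Real.log (1-l)) ρ θ₀ θ := by
    intro l hl θ hθ
    rw [hh, hF, hQ]
    exact hW_eq hρ hθ₀ hl.1 hl.2 hθ
  have hcurv' : ∀ l ∈ Set.Ioo (0:ℝ) 1,
      curv l = ρ^2 * (1-l) * (Real.log (1-l))^2 / (l * θ₀^2) := by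
    intro l hl
    rw [hcurv l]
    apply curvW hθ₀ hl.1 hl.2
    intro θ hθ
    rw [hform l hl θ hθ]
  refine ⟨?_, hcurv' lam ⟨hlam0, hlam1⟩, ?_⟩
  · intro θ hθ
    rw [hform lam ⟨hlam0, hlam1⟩ θ hθ, wW_rpow hlam1]
  · obtain ⟨l₁, hl₁mem, hroot⟩ := phiW_exists_root
    have hl₁Ioo : l₁ ∈ Set.Ioo (1/2:ℝ) 1 :=
      ⟨hl₁mem.1, by linarith [hl₁mem.2, Real.exp_pos (-2:ℝ)]⟩
    refine ⟨l₁, hl₁Ioo, hroot, ?_, ?_⟩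
    · intro l hl hphi
      exact phiW_strictMono.injOn ⟨hl.1.le, hl.2⟩ ⟨hl₁Ioo.1.le, hl₁Ioo.2⟩
        (by show phiW l = phiW l₁; rw [show phiW l = -2*l - Real.log (1-l) from rfl, hphi, hroot])
    · intro l hl hne
      have hl₁01 : l₁ ∈ Set.Ioo (0:ℝ) 1 := ⟨by linarith [hl₁Ioo.1], hl₁Ioo.2⟩
      rw [hcurv' l hl, hcurv' l₁ hl₁01]
      have hmax := fcnW_max hl₁Ioo hroot l hl hne
      have key : ∀ x : ℝ, x ≠ 0 →
          ρ^2*(1-x)*(Real.log (1-x))^2/(x*θ₀^2) = (ρ^2/θ₀^2) * fcnW x := by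
        intro x hx
        unfold fcnW
        field_simp
      rw [key l hl.1.ne', key l₁ (by linarith [hl₁Ioo.1] : l₁ ≠ 0)]
      exact mul_lt_mul_of_pos_left hmax (div_pos (pow_pos hρ 2) (pow_pos hθ₀ 2))
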